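/- Let H be a complex Hilbert space, V ⊆ H a subspace equipped with a norm ‖·‖ satisfying ‖v‖_H ≤ κ⁻¹‖v‖ for all v ∈ V with κ > 0, and a : V × V → ℂ a bounded sesquilinear form with bound C_a. Let U, W ⊆ V be subspaces such that a satisfies the discrete inf-sup condition with constant β > 0 on (U, W), and let ι : U → V and ι* : W → V be linear maps satisfying ‖ιu − u‖ ≤ ε‖u‖ for all u ∈ U and ‖ι*w − w‖ ≤ ε‖w‖ for all w ∈ W, where 0 ≤ ε ≤ min{1/2, β/(27·C_a)}. Let f ∈ H, let u ∈ V satisfy a(u, v) = (f, v)_H for all v ∈ V, let u_H ∈ U satisfy a(u_H, w) = (f, w)_H for all w ∈ W, and let u' ∈ ι(U) satisfy a(u', w') = (f, w')_H for all w' ∈ ι*(W). Then ‖u − u'‖ ≤ ‖u − u_H‖ + 14·(1 + C_a/β)·β⁻¹·κ⁻¹·ε·‖f‖_H. -/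

import Mathlib

set_option maxHeartbeats 1000000


/-- Abstract convergence theorem for the super-localized Petrov–Galerkin
method: `‖u − u'‖ ≤ ‖u − u_H‖ + 14(1 + C_a/β)β⁻¹κ⁻¹ε‖f‖_H`. -/
theorem stmt_6 {Hs : Type*} [NormedAddCommGroup Hs] [InnerProductSpace ℂ Hs] [CompleteSpace Hs]
    {V : Type*} [NormedAddCommGroup V] [NormedSpace ℂ V]
    (e : V →ₗ[ℂ] Hs) (he : Function.Injective e)
    (κ : ℝ) (hκ : 0 < κ) (hemb : ∀ v : V, ‖e v‖ ≤ κ⁻¹ * ‖v‖)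
    (a : V →ₗ[ℂ] V →ₗ⋆[ℂ] ℂ) (Ca : ℝ) (hCa : 0 < Ca)
    (hbound : ∀ u w : V, ‖a u w‖ ≤ Ca * ‖u‖ * ‖w‖)
    (U W : Submodule ℂ V) (β : ℝ) (hβ : 0 < β)
    (hinfsup : ∀ u ∈ U, u ≠ 0 → ∃ w ∈ W, w ≠ 0 ∧ β * ‖u‖ * ‖w‖ ≤ (a u w).re)
    (ι : U →ₗ[ℂ] V) (ιs : W →ₗ[ℂ] V) (ε : ℝ)
    (hε0 : 0 ≤ ε) (hε : ε ≤ min (1 / 2) (β / (27 * Ca)))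
    (hι : ∀ u : U, ‖ι u - (u : V)‖ ≤ ε * ‖(u : V)‖)
    (hιs : ∀ w : W, ‖ιs w - (w : V)‖ ≤ ε * ‖(w : V)‖)
    (f : Hs)
    (u : V) (hu : ∀ w : V, a u w = (inner ℂ (e w) f : ℂ))
    (uH : V) (huH : uH ∈ U) (huHeq : ∀ w ∈ W, a uH w = (inner ℂ (e w) f : ℂ))
    (u' : V) (hu' : u' ∈ LinearMap.range ι)
    (hu'eq : ∀ w' ∈ LinearMap.range ιs, a u' w' = (inner ℂ (e w') f : ℂ)) :
    ‖u - u'‖ ≤ ‖u - uH‖ + 14 * (1 + Ca / β) * β⁻¹ * κ⁻¹ * ε * ‖f‖ := by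
  obtain ⟨u₀, hu₀⟩ := hu'
  have hε2 : ε ≤ 1/2 := hε.trans (min_le_left _ _)
  have hεCa : Ca * ε ≤ β / 27 := by
    have h := hε.trans (min_le_right _ _)
    rw [le_div_iff₀ (by positivity)] at h
    linarith
  set M := κ⁻¹ * ‖f‖ with hMdef
  have hM0 : 0 ≤ M := by positivity
  -- a priori bound from inf-sup
  have key : ∀ x : V, x ∈ U → ∀ C : ℝ, 0 ≤ C →
      (∀ w : V, w ∈ W → (a x w).re ≤ C * ‖w‖) → β * ‖x‖ ≤ C := by
    intro x hx C hC h
    by_cases hx0 : x = 0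
    · simpa [hx0] using hC
    · obtain ⟨w, hw, hw0, hiw⟩ := hinfsup x hx hx0
      have h2 := h w hw
      have hwpos : 0 < ‖w‖ := norm_pos_iff.mpr hw0
      exact le_of_mul_le_mul_right (hiw.trans h2) hwpos
  have hinner : ∀ v : V, ‖(inner ℂ (e v) f : ℂ)‖ ≤ κ⁻¹ * ‖v‖ * ‖f‖ := by
    intro v
    calc ‖(inner ℂ (e v) f : ℂ)‖ ≤ ‖e v‖ * ‖f‖ := norm_inner_le_norm _ _
    _ ≤ κ⁻¹ * ‖v‖ * ‖f‖ :=
        mul_le_mul_of_nonneg_right (hemb v) (norm_nonneg f)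
  have hre : ∀ z : ℂ, z.re ≤ ‖z‖ := fun z => (Complex.re_le_norm z).trans_eq
    rfl
  -- bound on ‖uH‖
  have huHb : β * ‖uH‖ ≤ M := by
    refine key uH huH M hM0 (fun w hw => ?_)
    calc (a uH w).re ≤ ‖a uH w‖ := hre _
    _ = ‖(inner ℂ (e w) f : ℂ)‖ := by rw [huHeq w hw]
    _ ≤ κ⁻¹ * ‖w‖ * ‖f‖ := hinner w
    _ = M * ‖w‖ := by ring
  set N := ‖(u₀ : V)‖ with hNdef
  set P := ‖u'‖ with hPdef
  set D := ‖uH - (u₀ : V)‖ with hDdef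
  have hN0 : 0 ≤ N := norm_nonneg _
  have hP0 : 0 ≤ P := norm_nonneg _
  have hD0 : 0 ≤ D := norm_nonneg _
  -- the key residual bound
  have hD : β * D ≤ ε * (M + Ca * N + Ca * P) := by
    refine key _ (U.sub_mem huH u₀.2) _ (by positivity) (fun w hw => ?_)
    set w' : W := ⟨w, hw⟩ with hw'def
    have hcw : (w' : V) = w := rfl
    have heq : a (uH - (u₀ : V)) w =
        (inner ℂ (e (w - ιs w')) f : ℂ) - a ((u₀ : V) - ι u₀) w
          - a u' (w - ιs w') := by
      have h1 : a uH w = (inner ℂ (e w) f : ℂ) := huHeq w hw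
      have h2 : a u' (ιs w') = (inner ℂ (e (ιs w')) f : ℂ) := hu'eq _ ⟨w', rfl⟩
      have h3 : ι u₀ = u' := hu₀
      simp only [map_sub, LinearMap.sub_apply, h1, h3, inner_sub_left, h2]
      ring
    calc (a (uH - (u₀ : V)) w).re ≤ ‖a (uH - (u₀ : V)) w‖ := hre _
    _ = ‖(inner ℂ (e (w - ιs w')) f : ℂ) - a ((u₀ : V) - ι u₀) w
          - a u' (w - ιs w')‖ := by rw [heq]
    _ ≤ ‖(inner ℂ (e (w - ιs w')) f : ℂ)‖ + ‖a ((u₀ : V) - ι u₀) w‖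
          + ‖a u' (w - ιs w')‖ := by
        exact (norm_sub_le _ _).trans (by gcongr; exact norm_sub_le _ _)
    _ ≤ κ⁻¹ * (ε * ‖w‖) * ‖f‖ + Ca * (ε * N) * ‖w‖ + Ca * P * (ε * ‖w‖) := by
        have hb1 : ‖w - ιs w'‖ ≤ ε * ‖w‖ := by
          rw [norm_sub_rev]; simpa [hcw] using hιs w'
        have hb2 : ‖(u₀ : V) - ι u₀‖ ≤ ε * N := by
          rw [norm_sub_rev]; exact hι u₀
        gcongr
        · exact (hinner _).trans (by gcongr)
        · exact (hbound _ _).trans (by gcongr)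
        · exact (hbound _ _).trans (by gcongr)
    _ = ε * (M + Ca * N + Ca * P) * ‖w‖ := by rw [hMdef]; ring
  -- elementary norm inequalities
  have hNb : N ≤ ‖uH‖ + D := by
    calc N = ‖uH - (uH - (u₀ : V))‖ := by rw [sub_sub_cancel]
    _ ≤ ‖uH‖ + D := norm_sub_le _ _
  have hPb : P ≤ N + ε * N := by
    calc P = ‖(u' - (u₀ : V)) + (u₀ : V)‖ := by rw [sub_add_cancel]
    _ ≤ ‖u' - (u₀ : V)‖ + N := norm_add_le _ _
    _ ≤ ε * N + N := by
        gcongr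
        rw [← hu₀]; exact hι u₀
    _ = N + ε * N := by ring
  have hfin2 : ‖uH - u'‖ ≤ D + ε * N := by
    calc ‖uH - u'‖ = ‖(uH - (u₀ : V)) + ((u₀ : V) - u')‖ := by rw [sub_add_sub_cancel]
    _ ≤ D + ‖(u₀ : V) - u'‖ := norm_add_le _ _
    _ ≤ D + ε * N := by
        gcongr
        rw [norm_sub_rev, ← hu₀]; exact hι u₀
  have htri : ‖u - u'‖ ≤ ‖u - uH‖ + ‖uH - u'‖ := by
    calc ‖u - u'‖ = ‖(u - uH) + (uH - u')‖ := by rw [sub_add_sub_cancel]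
    _ ≤ _ := norm_add_le _ _
  have hrhs : 14 * (1 + Ca / β) * β⁻¹ * κ⁻¹ * ε * ‖f‖
      = 14 * (β + Ca) * ε * M / β ^ 2 := by
    have h1 : β ≠ 0 := hβ.ne'
    have h2 : κ ≠ 0 := hκ.ne'
    rw [hMdef]; field_simp
  -- final arithmetic
  have hβD : 0 ≤ β * D := mul_nonneg hβ.le hD0
  have hβN : 0 ≤ β * N := mul_nonneg hβ.le hN0
  have s1 : β * N ≤ M + β * D := by
    have p1 := mul_le_mul_of_nonneg_left hNb hβ.le
    linarith
  have s2 : β * P ≤ 3 / 2 * (M + β * D) := by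
    have p1 := mul_le_mul_of_nonneg_left hPb hβ.le
    have p2 := mul_le_mul_of_nonneg_right hε2 hβN
    linarith
  have hCaε : 0 ≤ Ca * ε := mul_nonneg hCa.le hε0
  have s3 : β ^ 2 * D ≤ 54 / 49 * (β * ε * M + 5 / 2 * (Ca * ε * M)) := by
    have t1 := mul_le_mul_of_nonneg_left hD hβ.le
    have t2 := mul_le_mul_of_nonneg_left s1 hCaε
    have t3 := mul_le_mul_of_nonneg_left s2 hCaε
    have t4 := mul_le_mul_of_nonneg_right hεCa hβD
    nlinarith [t1, t2, t3, t4]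
  have hfinal : ‖uH - u'‖ ≤ 14 * (β + Ca) * ε * M / β ^ 2 := by
    rw [le_div_iff₀ (by positivity)]
    have g1 := mul_le_mul_of_nonneg_right hfin2 (sq_nonneg β)
    have g2 := mul_le_mul_of_nonneg_left s1 (mul_nonneg hε0 hβ.le)
    have g3 := mul_le_mul_of_nonneg_right hε2 (mul_nonneg (sq_nonneg β) hD0)
    have g4 : 0 ≤ β * ε * M := mul_nonneg (mul_nonneg hβ.le hε0) hM0
    have g5 : 0 ≤ Ca * ε * M := mul_nonneg hCaε hM0
    linarith [g1, g2, g3, s3, g4, g5]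
  calc ‖u - u'‖ ≤ ‖u - uH‖ + ‖uH - u'‖ := htri
    _ ≤ ‖u - uH‖ + 14 * (β + Ca) * ε * M / β ^ 2 := add_le_add_right hfinal _
    _ = ‖u - uH‖ + 14 * (1 + Ca / β) * β⁻¹ * κ⁻¹ * ε * ‖f‖ := by rw [hrhs]
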